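/- Let L ⊆ K be compact convex sets containing 0 in a Hausdorff locally convex real topological vector space E. The following are equivalent: (i) there is a constant c > 0 such that |L|_d ≥ c·|K|_d for all d ∈ E with |L|_d > 0; (ii) there is a constant C > 0 such that (K - K) ∩ span_ℝ L ⊆ C·(L - L). -/

import Mathlib

open Pointwise

/-- Scaling up membership in a star-shaped set. -/
private lemma mem_smul_of_mem_smul {E : Type*} [AddCommGroup E] [Module ℝ E]
    {A : Set E} (hA : Convex ℝ A) (h0 : (0 : E) ∈ A) {x : E} {r t : ℝ}
    (hr : 0 < r) (hrt : r ≤ t) (hx : x ∈ r • A) : x ∈ t • A := by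
  obtain ⟨a, ha, rfl⟩ := hx
  have ht : 0 < t := hr.trans_le hrt
  refine ⟨(r / t) • a, ?_, ?_⟩
  · have := hA.smul_mem_of_zero_mem h0 ha
      (⟨by positivity, div_le_one_of_le₀ hrt ht.le⟩ : r / t ∈ Set.Icc (0:ℝ) 1)
    exact this
  · show t • ((r / t) • a) = r • a
    rw [smul_smul, mul_div_cancel₀ _ ht.ne']

/-- Every element of the span of `L` is absorbed by `L - L` (with `0 ∈ L`). -/
private lemma absorbed_of_mem_span {E : Type*} [AddCommGroup E] [Module ℝ E]
    {L : Set E} (hLconv : Convex ℝ L) (h0 : (0 : E) ∈ L) {x : E}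
    (hx : x ∈ Submodule.span ℝ L) : ∃ t : ℝ, 0 < t ∧ x ∈ t • (L - L) := by
  have hAconv : Convex ℝ (L - L) := hLconv.sub hLconv
  have hA0 : (0 : E) ∈ L - L := ⟨0, h0, 0, h0, by simp⟩
  have hAsymm : ∀ y ∈ L - L, -y ∈ L - L := by
    rintro y ⟨a, ha, b, hb, rfl⟩; exact ⟨b, hb, a, ha, by rw [neg_sub]⟩
  induction hx using Submodule.span_induction with
  | mem y hy => exact ⟨1, one_pos, by rw [one_smul]; exact ⟨y, hy, 0, h0, by simp⟩⟩
  | zero => exact ⟨1, one_pos, by rw [one_smul]; exact hA0⟩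
  | add y z _ _ hy hz =>
      obtain ⟨s, hs, a, ha, rfl⟩ := hy
      obtain ⟨t, ht, b, hb, rfl⟩ := hz
      refine ⟨s + t, by positivity, ?_⟩
      have h1 : s • a + t • b = (s + t) • ((s / (s + t)) • a + (t / (s + t)) • b) := by
        have hst : s + t ≠ 0 := by positivity
        rw [smul_add, smul_smul, smul_smul, mul_div_cancel₀ _ hst, mul_div_cancel₀ _ hst]
      rw [h1]
      refine ⟨_, hAconv ha hb (by positivity) (by positivity) ?_, rfl⟩
      field_simp
  | smul r y _ hy =>
      obtain ⟨t, ht, a, ha, rfl⟩ := hy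
      rcases eq_or_ne r 0 with rfl | hr
      · exact ⟨1, one_pos, by rw [zero_smul, one_smul]; exact hA0⟩
      · refine ⟨|r| * t, by positivity, ?_⟩
        rcases le_or_gt 0 r with h | h
        · rw [abs_of_nonneg h]
          exact ⟨a, ha, by simp [smul_smul]⟩
        · rw [abs_of_neg h]
          exact ⟨-a, hAsymm a ha, by simp [smul_smul]⟩

/-- For compact convex `0 ∈ L ⊆ K`, the width comparison `|L|_d ≥ c|K|_d` (for `d`
with `|L|_d > 0`, expressed via Minkowski gauges as `c · gauge (L-L) d ≤ gauge (K-K) d`)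
holds for some `c > 0` if and only if `(K - K) ∩ span ℝ L ⊆ C • (L - L)` for some `C > 0`. -/
theorem stmt_9 {E : Type*} [AddCommGroup E] [Module ℝ E] [TopologicalSpace E]
    [IsTopologicalAddGroup E] [ContinuousSMul ℝ E] [LocallyConvexSpace ℝ E] [T2Space E]
    (K L : Set E) (hK : IsCompact K) (hKconv : Convex ℝ K)
    (hL : IsCompact L) (hLconv : Convex ℝ L) (h0 : (0 : E) ∈ L) (hLK : L ⊆ K) :
    (∃ c : ℝ, 0 < c ∧ ∀ d : E, (∃ t : ℝ, 0 < t ∧ t • d ∈ L - L) →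
        c * gauge (L - L) d ≤ gauge (K - K) d) ↔
      (∃ C : ℝ, 0 < C ∧ (K - K) ∩ (Submodule.span ℝ L : Set E) ⊆ C • (L - L)) := by
  have hAconv : Convex ℝ (L - L) := hLconv.sub hLconv
  have hA0 : (0 : E) ∈ L - L := ⟨0, h0, 0, h0, by simp⟩
  constructor
  · rintro ⟨c, hc, hcomp⟩
    refine ⟨2 / c, by positivity, ?_⟩
    rintro x ⟨hxK, hxspan⟩
    -- x is absorbed by L - L
    obtain ⟨s, hs, hxs⟩ := absorbed_of_mem_span hLconv h0 hxspan
    have habs : ∃ t : ℝ, 0 < t ∧ t • x ∈ L - L := by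
      obtain ⟨a, ha, rfl⟩ := hxs
      exact ⟨s⁻¹, by positivity, by rw [smul_smul, inv_mul_cancel₀ hs.ne', one_smul]; exact ha⟩
    have h1 : gauge (K - K) x ≤ 1 := gauge_le_of_mem zero_le_one (by rw [one_smul]; exact hxK)
    have h2 : gauge (L - L) x ≤ 1 / c := by
      have := hcomp x habs
      rw [le_div_iff₀ hc, mul_comm]
      exact this.trans h1
    -- from gauge < 2/c, get membership in (2/c) • (L - L)
    have h3 : gauge (L - L) x < 2 / c := lt_of_le_of_lt h2 (by
      rw [div_lt_div_iff₀ hc hc]; linarith)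
    rw [gauge] at h3
    have hne : {r : ℝ | 0 < r ∧ x ∈ r • (L - L)}.Nonempty := ⟨s, hs, hxs⟩
    obtain ⟨r, ⟨hr0, hrmem⟩, hr⟩ := exists_lt_of_csInf_lt hne h3
    exact mem_smul_of_mem_smul hAconv hA0 hr0 hr.le hrmem
  · rintro ⟨C, hC, hsub⟩
    refine ⟨C⁻¹, by positivity, ?_⟩
    rintro d ⟨t, ht, htd⟩
    have hdspan : d ∈ Submodule.span ℝ L := by
      have hsub' : L - L ⊆ (Submodule.span ℝ L : Set E) := by
        rintro y ⟨a, ha, b, hb, rfl⟩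
        exact sub_mem (Submodule.subset_span ha) (Submodule.subset_span hb)
      have : t • d ∈ Submodule.span ℝ L := hsub' htd
      have := Submodule.smul_mem _ t⁻¹ this
      rwa [smul_smul, inv_mul_cancel₀ ht.ne', one_smul] at this
    -- key: gauge (L-L) d ≤ C * gauge (K-K) d
    have key : gauge (L - L) d ≤ C * gauge (K - K) d := by
      have hneK : {r : ℝ | 0 < r ∧ d ∈ r • (K - K)}.Nonempty := by
        refine ⟨t⁻¹, by positivity, ?_⟩
        have : t • d ∈ K - K := by
          obtain ⟨a, ha, b, hb, h⟩ := htd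
          exact ⟨a, hLK ha, b, hLK hb, h⟩
        exact ⟨t • d, this, by simp [smul_smul, inv_mul_cancel₀ ht.ne']⟩
      have hlb : ∀ r ∈ {r : ℝ | 0 < r ∧ d ∈ r • (K - K)}, gauge (L - L) d / C ≤ r := by
        rintro r ⟨hr0, a, haK, rfl⟩
        have haspan : a ∈ Submodule.span ℝ L := by
          have := Submodule.smul_mem (Submodule.span ℝ L) r⁻¹ hdspan
          rwa [smul_smul, inv_mul_cancel₀ hr0.ne', one_smul] at this
        have haL : a ∈ C • (L - L) := hsub ⟨haK, haspan⟩
        have : r • a ∈ (r * C) • (L - L) := by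
          obtain ⟨b, hb, rfl⟩ := haL
          exact ⟨b, hb, by simp [smul_smul]⟩
        have hg : gauge (L - L) (r • a) ≤ r * C := gauge_le_of_mem (by positivity) this
        rw [div_le_iff₀ hC]
        linarith [hg]
      have := le_csInf hneK hlb
      rw [gauge, div_le_iff₀ hC] at *
      calc gauge (L - L) d ≤ sInf {r : ℝ | 0 < r ∧ d ∈ r • (K - K)} * C := by
            rw [← div_le_iff₀ hC]; exact le_csInf hneK hlb
        _ = C * gauge (K - K) d := by rw [gauge]; ring
    rw [inv_mul_le_iff₀ hC]
    exact key
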